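/- arXiv:2109.14110 — 4 statements merged into one kernel-verified Lean document; each statement's English description precedes it below -/
import Mathlib

section
/- Let x₀, x₁, x₂, x₃ be real numbers and α, β, γ ∈ {0,1}. Suppose ⌊x₀−x₂⌋ − ⌊x₀−x₁⌋ = ⌊x₁−x₂⌋ + α, ⌊x₀−x₃⌋ − ⌊x₀−x₁⌋ = ⌊x₁−x₃⌋ + β, and ⌊x₀−x₃⌋ − ⌊x₀−x₂⌋ = ⌊x₂−x₃⌋ + γ. Then β ≤ α + γ ≤ β + 1. -/
theorem triple_relation_ineq (x₀ x₁ x₂ x₃ : ℝ) (α β γ : ℤ)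
    (hα : α = 0 ∨ α = 1) (hβ : β = 0 ∨ β = 1) (hγ : γ = 0 ∨ γ = 1)
    (h12 : ⌊x₀ - x₂⌋ - ⌊x₀ - x₁⌋ = ⌊x₁ - x₂⌋ + α)
    (h13 : ⌊x₀ - x₃⌋ - ⌊x₀ - x₁⌋ = ⌊x₁ - x₃⌋ + β)
    (h23 : ⌊x₀ - x₃⌋ - ⌊x₀ - x₂⌋ = ⌊x₂ - x₃⌋ + γ) :
    β ≤ α + γ ∧ α + γ ≤ β + 1 := by
  have key : x₁ - x₃ = (x₁ - x₂) + (x₂ - x₃) := by ring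
  have fa := Int.floor_le (x₁ - x₂)
  have fb := Int.floor_le (x₂ - x₃)
  have ga := Int.lt_floor_add_one (x₁ - x₂)
  have gb := Int.lt_floor_add_one (x₂ - x₃)
  have h1 : ⌊x₁ - x₂⌋ + ⌊x₂ - x₃⌋ ≤ ⌊x₁ - x₃⌋ := by
    rw [key]; exact Int.le_floor.2 (by push_cast; linarith)
  have h2 : ⌊x₁ - x₃⌋ ≤ ⌊x₁ - x₂⌋ + ⌊x₂ - x₃⌋ + 1 := by
    rw [key]
    have := Int.floor_le (x₁ - x₂ + (x₂ - x₃))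
    have : (⌊x₁ - x₂ + (x₂ - x₃)⌋ : ℝ) < ⌊x₁ - x₂⌋ + ⌊x₂ - x₃⌋ + 2 := by linarith
    have h4 : ⌊x₁ - x₂ + (x₂ - x₃)⌋ < ⌊x₁ - x₂⌋ + ⌊x₂ - x₃⌋ + 2 := by exact_mod_cast this
    omega
  omega
end

section
/- Let x₀, x₁, x₂, x₃ be real numbers. It is impossible that simultaneously ⌊x₀−x₂⌋ − ⌊x₀−x₁⌋ = ⌊x₁−x₂⌋, ⌊x₀−x₃⌋ − ⌊x₀−x₁⌋ = ⌊x₁−x₃⌋ + 1, and ⌊x₀−x₃⌋ − ⌊x₀−x₂⌋ = ⌊x₂−x₃⌋ (i.e., the triple of relations (R⁰₁₂, R¹₁₃, R⁰₂₃) cannot all hold). -/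
theorem not_R0_R1_R0 (x₀ x₁ x₂ x₃ : ℝ) :
    ¬ (⌊x₀ - x₂⌋ - ⌊x₀ - x₁⌋ = ⌊x₁ - x₂⌋ ∧
       ⌊x₀ - x₃⌋ - ⌊x₀ - x₁⌋ = ⌊x₁ - x₃⌋ + 1 ∧
       ⌊x₀ - x₃⌋ - ⌊x₀ - x₂⌋ = ⌊x₂ - x₃⌋) := by
  rintro ⟨h1, h2, h3⟩
  have a1 := Int.floor_le (x₁ - x₂)
  have a2 := Int.floor_le (x₂ - x₃)
  have b1 := Int.lt_floor_add_one (x₁ - x₃)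
  -- from h1, h2, h3 : ⌊x₁−x₂⌋ + ⌊x₂−x₃⌋ = ⌊x₁−x₃⌋ + 1
  have key : ⌊x₁ - x₂⌋ + ⌊x₂ - x₃⌋ = ⌊x₁ - x₃⌋ + 1 := by omega
  have : (↑(⌊x₁ - x₂⌋ + ⌊x₂ - x₃⌋) : ℝ) = ↑(⌊x₁ - x₃⌋ + 1) := by exact_mod_cast key
  push_cast at this
  linarith
end

section
/- Let x₀, x₁, x₂, x₃ be real numbers. It is impossible that simultaneously ⌊x₀−x₂⌋ − ⌊x₀−x₁⌋ = ⌊x₁−x₂⌋ + 1, ⌊x₀−x₃⌋ − ⌊x₀−x₁⌋ = ⌊x₁−x₃⌋, and ⌊x₀−x₃⌋ − ⌊x₀−x₂⌋ = ⌊x₂−x₃⌋ + 1 (i.e., the triple of relations (R¹₁₂, R⁰₁₃, R¹₂₃) cannot all hold). -/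
theorem not_R1_R0_R1 (x₀ x₁ x₂ x₃ : ℝ) :
    ¬ (⌊x₀ - x₂⌋ - ⌊x₀ - x₁⌋ = ⌊x₁ - x₂⌋ + 1 ∧
       ⌊x₀ - x₃⌋ - ⌊x₀ - x₁⌋ = ⌊x₁ - x₃⌋ ∧
       ⌊x₀ - x₃⌋ - ⌊x₀ - x₂⌋ = ⌊x₂ - x₃⌋ + 1) := by
  rintro ⟨h1, h2, h3⟩
  have h1' := congrArg (fun n : ℤ => (n : ℝ)) h1
  have h2' := congrArg (fun n : ℤ => (n : ℝ)) h2
  have h3' := congrArg (fun n : ℤ => (n : ℝ)) h3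
  push_cast at h1' h2' h3'
  simp only [← Int.self_sub_fract] at h1' h2' h3'
  have a1 := Int.fract_nonneg (x₁ - x₃)
  have b1 := Int.fract_lt_one (x₁ - x₂)
  have b2 := Int.fract_lt_one (x₂ - x₃)
  linarith
end

section
/- Let k₀₁, k₁₂, k₂₃, K₀₂, K₁₃, K₀₃ be integers with K₀₂ ≤ k₀₁ + k₁₂ − 1, K₁₃ ≤ k₁₂ + k₂₃ − 1, K₀₃ ≤ k₀₁ + K₁₃ − 1, and K₀₃ ≤ K₀₂ + k₂₃ − 1. Let x₀, x₁, x₂, x₃ be real numbers with x₀−x₁ < k₀₁, x₁−x₂ < k₁₂, x₂−x₃ < k₂₃, x₁−x₃ < K₁₃, x₀−x₃ < K₀₃, x₀−x₂ < K₀₂. If ⌊x₀−x₁⌋ = k₀₁ − 1 and ⌊x₀−x₂⌋ = K₀₂ − 1, then setting p_i = ⌊x₀−x_i⌋ for i = 1,2,3, the integers satisfy p₁ ≤ k₀₁−1, p₂ ≤ K₀₂−1, p₃ ≤ K₀₃−1, p₂−p₁ ≤ k₁₂−1, p₃−p₂ ≤ k₂₃−1, p₃−p₁ ≤ K₁₃−1,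 and the numbers z₀ = x₀, z_i = x_i + p_i (i = 1,2,3) satisfy −1 < z_i − z_j < 1 for all 0 ≤ i < j ≤ 3. -/
theorem lemma_case1 (k01 k12 k23 K02 K13 K03 : ℤ)
    (hK02 : K02 ≤ k01 + k12 - 1) (hK13 : K13 ≤ k12 + k23 - 1)
    (hK03a : K03 ≤ k01 + K13 - 1) (hK03b : K03 ≤ K02 + k23 - 1)
    (x₀ x₁ x₂ x₃ : ℝ)
    (h01 : x₀ - x₁ < k01) (h12 : x₁ - x₂ < k12) (h23 : x₂ - x₃ < k23)
    (h13 : x₁ - x₃ < K13) (h03 : x₀ - x₃ < K03) (h02 : x₀ - x₂ < K02)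
    (hf1 : ⌊x₀ - x₁⌋ = k01 - 1) (hf2 : ⌊x₀ - x₂⌋ = K02 - 1) :
    (⌊x₀ - x₁⌋ ≤ k01 - 1 ∧ ⌊x₀ - x₂⌋ ≤ K02 - 1 ∧ ⌊x₀ - x₃⌋ ≤ K03 - 1 ∧
     ⌊x₀ - x₂⌋ - ⌊x₀ - x₁⌋ ≤ k12 - 1 ∧ ⌊x₀ - x₃⌋ - ⌊x₀ - x₂⌋ ≤ k23 - 1 ∧
     ⌊x₀ - x₃⌋ - ⌊x₀ - x₁⌋ ≤ K13 - 1) ∧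
    (|x₀ - (x₁ + ⌊x₀ - x₁⌋)| < 1 ∧ |x₀ - (x₂ + ⌊x₀ - x₂⌋)| < 1 ∧
     |x₀ - (x₃ + ⌊x₀ - x₃⌋)| < 1 ∧
     |(x₁ + ⌊x₀ - x₁⌋) - (x₂ + ⌊x₀ - x₂⌋)| < 1 ∧
     |(x₁ + ⌊x₀ - x₁⌋) - (x₃ + ⌊x₀ - x₃⌋)| < 1 ∧
     |(x₂ + ⌊x₀ - x₂⌋) - (x₃ + ⌊x₀ - x₃⌋)| < 1) := by
  have b3 : ⌊x₀ - x₃⌋ ≤ K03 - 1 := by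
    have : ⌊x₀ - x₃⌋ < K03 := Int.floor_lt.mpr h03
    omega
  have l1 : (⌊x₀ - x₁⌋ : ℝ) ≤ x₀ - x₁ := Int.floor_le _
  have u1 : x₀ - x₁ < ⌊x₀ - x₁⌋ + 1 := Int.lt_floor_add_one _
  have l2 : (⌊x₀ - x₂⌋ : ℝ) ≤ x₀ - x₂ := Int.floor_le _
  have u2 : x₀ - x₂ < ⌊x₀ - x₂⌋ + 1 := Int.lt_floor_add_one _
  have l3 : (⌊x₀ - x₃⌋ : ℝ) ≤ x₀ - x₃ := Int.floor_le _
  have u3 : x₀ - x₃ < ⌊x₀ - x₃⌋ + 1 := Int.lt_floor_add_one _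
  refine ⟨⟨le_of_eq hf1, le_of_eq hf2, b3, by omega, by omega, by omega⟩,
    ?_, ?_, ?_, ?_, ?_, ?_⟩ <;>
  · rw [abs_lt]; constructor <;> linarith
end
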